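/- Let λ > 0 and a ∈ ℝ^q with λ < ‖a‖₁ = Σ_{i=1}^q |a_i|, and suppose λ₁ ≥ 0 satisfies Σ_{i=1}^q max(|a_i| − λ₁, 0) = λ. Then the vector b̂ = a − soft(a, λ₁), where soft(a, λ₁) has i-th entry sign(a_i)·max(|a_i| − λ₁, 0), is the unique minimizer of the function b ↦ λ‖b‖_∞ + (1/2)‖b − a‖₂² on ℝ^q. -/
import Mathlib


/-- if `λ < ‖a‖₁` and `λ₁ ≥ 0` satisfies
`Σ max(|aᵢ| − λ₁, 0) = λ`, then `b̂ = a − soft(a, λ₁)` is the unique minimizer of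
`b ↦ λ‖b‖_∞ + (1/2)‖b − a‖₂²` on `ℝ^q`. -/
theorem stmt_12 (q : ℕ) [NeZero q] (l : ℝ) (hl : 0 < l) (a : Fin q → ℝ)
    (hla : l < ∑ i, |a i|)
    (l1 : ℝ) (hl1 : 0 ≤ l1) (hsum : ∑ i, max (|a i| - l1) 0 = l)
    (f : (Fin q → ℝ) → ℝ)
    (hf : ∀ b, f b = l * (Finset.univ.sup' Finset.univ_nonempty fun i => |b i|)
      + (1 / 2) * ∑ i, (b i - a i) ^ 2)
    (bhat : Fin q → ℝ)
    (hbhat : ∀ i, bhat i = a i - Real.sign (a i) * max (|a i| - l1) 0) :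
    (∀ b, f bhat ≤ f b) ∧ (∀ b, (∀ c, f b ≤ f c) → b = bhat) := by
  have hmn : ∀ i, (0:ℝ) ≤ max (|a i| - l1) 0 := fun i => le_max_right _ _
  have hminn : ∀ i, (0:ℝ) ≤ min (|a i|) l1 := fun i => le_min (abs_nonneg _) hl1
  have hmaxmin : ∀ i, max (|a i| - l1) 0 + min (|a i|) l1 = |a i| := by
    intro i; rcases le_total (|a i|) l1 with h | h
    · rw [max_eq_right (by linarith), min_eq_left h]; ring
    · rw [max_eq_left (by linarith), min_eq_right h]; ring
  have hsign1 : ∀ x : ℝ, |Real.sign x| ≤ 1 := by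
    intro x
    rcases lt_trichotomy x 0 with h | h | h
    · rw [Real.sign_of_neg h]; norm_num
    · rw [h, Real.sign_zero]; norm_num
    · rw [Real.sign_of_pos h]; norm_num
  have hb : ∀ i, bhat i = Real.sign (a i) * min (|a i|) l1 := by
    intro i
    have h1 : Real.sign (a i) * |a i| = a i := by
      rcases lt_trichotomy (a i) 0 with h | h | h
      · rw [Real.sign_of_neg h, abs_of_neg h]; ring
      · rw [h, Real.sign_zero, abs_zero, mul_zero]
      · rw [Real.sign_of_pos h, abs_of_pos h]; ring
    have h2 := hmaxmin i
    rw [hbhat i]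
    linear_combination (-1 : ℝ) * h1 - Real.sign (a i) * h2
  have habs : ∀ i, |bhat i| = |Real.sign (a i)| * min (|a i|) l1 := by
    intro i; rw [hb i, abs_mul, abs_of_nonneg (hminn i)]
  have hble : ∀ i, |bhat i| ≤ l1 := by
    intro i; rw [habs i]
    calc |Real.sign (a i)| * min (|a i|) l1 ≤ 1 * min (|a i|) l1 :=
          mul_le_mul_of_nonneg_right (hsign1 _) (hminn i)
      _ = min (|a i|) l1 := one_mul _
      _ ≤ l1 := min_le_right _ _
  have hex : ∃ i, l1 < |a i| := by
    by_contra h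
    push_neg at h
    have h0 : ∑ i, max (|a i| - l1) 0 = 0 :=
      Finset.sum_eq_zero fun i _ => max_eq_right (by linarith [h i])
    rw [hsum] at h0; linarith
  obtain ⟨i0, hi0⟩ := hex
  have ha0 : a i0 ≠ 0 := by
    intro h; rw [h] at hi0; simp at hi0; linarith
  have hs0 : |Real.sign (a i0)| = 1 := by
    rcases lt_trichotomy (a i0) 0 with h | h | h
    · rw [Real.sign_of_neg h]; norm_num
    · exact absurd h ha0
    · rw [Real.sign_of_pos h]; norm_num
  have hbi0 : |bhat i0| = l1 := by
    rw [habs i0, hs0, one_mul, min_eq_right hi0.le]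
  have hSbhat : (Finset.univ.sup' Finset.univ_nonempty fun i => |bhat i|) = l1 := by
    apply le_antisymm
    · exact Finset.sup'_le _ _ fun i _ => hble i
    · rw [← hbi0]; exact Finset.le_sup' (fun i => |bhat i|) (Finset.mem_univ i0)
  have hF2 : ∀ i, max (|a i| - l1) 0 * (Real.sign (a i) * bhat i)
      = max (|a i| - l1) 0 * l1 := by
    intro i
    rcases le_or_gt (|a i|) l1 with h | h
    · rw [max_eq_right (by linarith), zero_mul, zero_mul]
    · have han : a i ≠ 0 := by intro h0; rw [h0] at h; simp at h; linarith
      have hs : Real.sign (a i) * Real.sign (a i) = 1 := by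
        rcases lt_trichotomy (a i) 0 with h' | h' | h'
        · rw [Real.sign_of_neg h']; norm_num
        · exact absurd h' han
        · rw [Real.sign_of_pos h']; norm_num
      rw [hb i, min_eq_right h.le]
      linear_combination (max (|a i| - l1) 0 * l1) * hs
  have hkey : ∀ b, f bhat + (1/2) * ∑ i, (b i - bhat i)^2 ≤ f b := by
    intro b
    have hSb : ∀ i, |b i| ≤ Finset.univ.sup' Finset.univ_nonempty fun i => |b i| :=
      fun i => Finset.le_sup' (fun i => |b i|) (Finset.mem_univ i)
    have hpt : ∀ i, (b i - a i)^2 = (bhat i - a i)^2 + (b i - bhat i)^2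
        + 2 * (max (|a i| - l1) 0 * (Real.sign (a i) * bhat i)
               - max (|a i| - l1) 0 * (Real.sign (a i) * b i)) := by
      intro i
      linear_combination (2 * (b i - bhat i)) * hbhat i
    have eq1 : ∑ i, (b i - a i)^2
        = ∑ i, (bhat i - a i)^2 + ∑ i, (b i - bhat i)^2
          + 2 * (∑ i, max (|a i| - l1) 0 * (Real.sign (a i) * bhat i)
                 - ∑ i, max (|a i| - l1) 0 * (Real.sign (a i) * b i)) := by
      rw [← Finset.sum_sub_distrib, Finset.mul_sum, ← Finset.sum_add_distrib,
        ← Finset.sum_add_distrib]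
      exact Finset.sum_congr rfl fun i _ => hpt i
    have eq2 : ∑ i, max (|a i| - l1) 0 * (Real.sign (a i) * bhat i) = l * l1 := by
      rw [Finset.sum_congr rfl fun i _ => hF2 i, ← Finset.sum_mul, hsum]
    have hTle : ∑ i, max (|a i| - l1) 0 * (Real.sign (a i) * b i)
        ≤ l * Finset.univ.sup' Finset.univ_nonempty fun i => |b i| := by
      calc ∑ i, max (|a i| - l1) 0 * (Real.sign (a i) * b i)
          ≤ ∑ i, max (|a i| - l1) 0
              * Finset.univ.sup' Finset.univ_nonempty fun i => |b i| := by
            refine Finset.sum_le_sum fun i _ => mul_le_mul_of_nonneg_left ?_ (hmn i)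
            calc Real.sign (a i) * b i ≤ |Real.sign (a i) * b i| := le_abs_self _
              _ = |Real.sign (a i)| * |b i| := abs_mul _ _
              _ ≤ 1 * |b i| := mul_le_mul_of_nonneg_right (hsign1 _) (abs_nonneg _)
              _ = |b i| := one_mul _
              _ ≤ _ := hSb i
        _ = l * Finset.univ.sup' Finset.univ_nonempty fun i => |b i| := by
            rw [← Finset.sum_mul, hsum]
    rw [hf b, hf bhat, hSbhat]
    linarith [eq1, eq2, hTle]
  refine ⟨fun b => ?_, fun b hbmin => ?_⟩
  · have h := hkey b
    have hD : 0 ≤ ∑ i, (b i - bhat i)^2 := Finset.sum_nonneg fun i _ => sq_nonneg _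
    linarith
  · have h1 := hbmin bhat
    have h2 := hkey b
    have hD0 : ∑ i, (b i - bhat i)^2 = 0 :=
      le_antisymm (by linarith) (Finset.sum_nonneg fun i _ => sq_nonneg _)
    funext i
    have h3 := (Finset.sum_eq_zero_iff_of_nonneg
      fun i _ => sq_nonneg (b i - bhat i)).mp hD0 i (Finset.mem_univ i)
    have h4 : b i - bhat i = 0 := by
      have := sq_eq_zero_iff.mp h3
      exact this
    linarith
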